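/- Fix real constants A > 0, M ≥ 0, J > 0, and ρ0 ∈ (0,1). Let z : ℝ → ℝ be differentiable on [t₀, t₁] with z'(t) = A·z(t) + w(t) and |w(t)| ≤ M for all t ∈ [t₀, t₁]. If |z(t₀)| ≤ ρ0·J and |z(t₁)| ≥ J, then t₁ − t₀ ≥ (1/A)·ln( (J + M/A) / (ρ0·J + M/A) ). (Lemma 2: the time needed for the estimation error to grow from ρ0·J to the triggering threshold J is uniformly lower-bounded, so the event-triggered scheme exhibits no Zeno behavior.) -/

import Mathlib

open Set Filter

/-- **Lemma 2 (no Zeno behavior).** The time needed for the estimation error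
to grow from `ρ0·J` to the triggering threshold `J` is uniformly lower
bounded: if `|z(t₀)| ≤ ρ0·J` and `|z(t₁)| ≥ J`, then
`t₁ − t₀ ≥ (1/A)·ln((J + M/A)/(ρ0·J + M/A))`. -/
theorem inter_event_time_lower_bound
    (A M J ρ0 : ℝ) (z w : ℝ → ℝ) (t₀ t₁ : ℝ)
    (hA : 0 < A) (hM : 0 ≤ M) (hJ : 0 < J)
    (hρ0 : 0 < ρ0) (hρ1 : ρ0 < 1)
    (h01 : t₀ ≤ t₁)
    (hz : ∀ t ∈ Icc t₀ t₁, HasDerivAt z (A * z t + w t) t)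
    (hw : ∀ t ∈ Icc t₀ t₁, |w t| ≤ M)
    (hz0 : |z t₀| ≤ ρ0 * J)
    (hz1 : |z t₁| ≥ J) :
    t₁ - t₀ ≥ (1 / A) * Real.log ((J + M / A) / (ρ0 * J + M / A)) := by
  have hcont : ContinuousOn z (Icc t₀ t₁) := fun t ht =>
    (hz t ht).continuousAt.continuousWithinAt
  have hderiv : ∀ t ∈ Ico t₀ t₁, HasDerivWithinAt z (A * z t + w t) (Ici t) t :=
    fun t ht => (hz t (Ico_subset_Icc_self ht)).hasDerivWithinAt
  have hbd : ∀ t ∈ Ico t₀ t₁, ‖A * z t + w t‖ ≤ A * ‖z t‖ + M := by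
    intro t ht
    calc ‖A * z t + w t‖ ≤ ‖A * z t‖ + ‖w t‖ := norm_add_le _ _
      _ ≤ A * ‖z t‖ + M := by
          rw [norm_mul, Real.norm_of_nonneg hA.le]
          exact add_le_add (le_refl _) (hw t (Ico_subset_Icc_self ht))
  have key := norm_le_gronwallBound_of_norm_deriv_right_le hcont hderiv hz0 hbd t₁
    (right_mem_Icc.2 h01)
  rw [gronwallBound_of_K_ne_0 hA.ne'] at key
  set T := t₁ - t₀ with hT
  -- key : ‖z t₁‖ ≤ ρ0*J * exp (A*T) + M/A * (exp (A*T) - 1)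
  have hD : 0 < ρ0 * J + M / A := by positivity
  have hE : 0 < J + M / A := by positivity
  have hexp : J + M / A ≤ (ρ0 * J + M / A) * Real.exp (A * T) := by
    have : J ≤ ρ0 * J * Real.exp (A * T) + M / A * (Real.exp (A * T) - 1) :=
      le_trans hz1 key
    nlinarith [this]
  have hlog : Real.log ((J + M / A) / (ρ0 * J + M / A)) ≤ A * T := by
    rw [Real.log_le_iff_le_exp (by positivity)]
    rw [div_le_iff₀ hD] at *
    linarith [hexp]
  calc (1 / A) * Real.log ((J + M / A) / (ρ0 * J + M / A))
      ≤ (1 / A) * (A * T) := by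
        apply mul_le_mul_of_nonneg_left hlog (by positivity)
    _ = T := by field_simp
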